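/- The recession cone C^n(K,0) of the set of convex extensions of an i-centered incomplete game is pointed: if w : 2^N → ℝ is convex (w(S)+w(T) ≤ w(S∩T)+w(S∪T) for all S,T) and w(S)=0 for all S ∈ K, and −w also has these properties, then w = 0. -/

import Mathlib

open Finset

/-- Möbius transform of a (complete) cooperative game `w : 2^N → ℝ`. -/
noncomputable def mobius {α : Type*} [DecidableEq α] (w : Finset α → ℝ) (T : Finset α) : ℝ :=
  ∑ S ∈ T.powerset, (-1 : ℝ) ^ (T.card - S.card) * w S

/-- Möbius transform of an `i`-centered incomplete game `v`, defined for `S ∈ K`,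
where `K = {S : i ∈ S} ∪ {∅}`: `m^v(S) = Σ_{T ⊆ S, T ∈ K} (-1)^{|S \ T|} v(T)`. -/
noncomputable def mobiusK {α : Type*} [DecidableEq α] (i : α) (v : Finset α → ℝ)
    (S : Finset α) : ℝ :=
  ∑ T ∈ S.powerset.filter (fun T => i ∈ T ∨ T = ∅), (-1 : ℝ) ^ ((S \ T).card) * v T

/-- The recession cone `C^n(K,0)` of the set of convex extensions is pointed: if a game `w`
vanishes on `K = {S : i ∈ S} ∪ {∅}` and both `w` and `-w` are convex (supermodular),
then `w = 0`. -/
theorem stmt5 {α : Type*} [Fintype α] [DecidableEq α] (i : α) (w : Finset α → ℝ)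
    (hK : ∀ S : Finset α, (i ∈ S ∨ S = ∅) → w S = 0)
    (hconv : ∀ S T : Finset α, w S + w T ≤ w (S ∩ T) + w (S ∪ T))
    (hconv' : ∀ S T : Finset α, (-w S) + (-w T) ≤ (-w (S ∩ T)) + (-w (S ∪ T))) :
    w = 0 := by
  have hmod : ∀ S T : Finset α, w S + w T = w (S ∩ T) + w (S ∪ T) := fun S T =>
    le_antisymm (hconv S T) (by linarith [hconv' S T])
  have h0 : w ∅ = 0 := hK ∅ (Or.inr rfl)
  have hsing : ∀ j : α, w {j} = 0 := by
    intro j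
    by_cases hj : j = i
    · exact hK {j} (Or.inl (by simp [hj]))
    · have h := hmod {i} {j}
      have h1 : ({i} : Finset α) ∩ {j} = ∅ :=
        Finset.singleton_inter_of_notMem (by simpa using fun h => hj h.symm)
      have h2 : w (({i} : Finset α) ∪ {j}) = 0 := hK _ (Or.inl (by simp))
      have h3 : w ({i} : Finset α) = 0 := hK _ (Or.inl (by simp))
      rw [h1, h2, h3, h0] at h
      linarith
  have hins : ∀ (j : α) (S : Finset α), j ∉ S → w (insert j S) = w S := by
    intro j S hjS
    have h := hmod S {j}
    have h1 : S ∩ {j} = ∅ := Finset.inter_singleton_of_notMem hjS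
    have h2 : S ∪ {j} = insert j S := by ext x; simp [or_comm]
    rw [h1, h2, h0, hsing j] at h
    linarith
  funext S
  induction S using Finset.induction with
  | empty => simpa using h0
  | insert _ _ hj ih => simp only [Pi.zero_apply] at *; rw [hins _ _ hj, ih]
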